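/- Let p be a prime, F a field of characteristic p, and f ∈ F[X]. Let S_f : F[X] → F[X] be the map u ↦ ∂(f·u), and set g := (S_f)^{p−1}(1), so that g is the differential expression ∂(f∂(…(f∂f)…)) with p−1 occurrences of ∂ and p−1 occurrences of f. Then: (i) g is congruent modulo the ideal (X^p) to the constant polynomial g(0) (its coefficient of X^0), i.e. g − g(0) ∈ (X^p); and (ii) for every h ∈ F[X], (T_f)^p(h) − g(0)·(f·∂h) ∈ (X^p), where T_f(h) = f·∂h. In other words, the constant C(f) with (f∂)^[p] = C(f)·f∂ in Der(F[X]/(X^p)) is equal to ∂(f∂(…(f∂f)…)). -/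

import Mathlib

open Polynomial Finset

-- helper: an additive function maps finite sums to sums
theorem map_sum' {M : Type*} [AddCommMonoid M] (φ : M → M)
    (hφ : ∀ a b, φ (a + b) = φ a + φ b) {ι : Type*} (s : Finset ι) (g : ι → M)
    (h0 : φ 0 = 0) : φ (∑ i ∈ s, g i) = ∑ i ∈ s, φ (g i) := by
  classical
  induction s using Finset.induction with
  | empty => simpa
  | insert _ _ hmem ih => simp [Finset.sum_insert hmem, hφ, ih]

namespace WittAux

variable {F : Type*} [Field F] (f : Polynomial F)

/-- The operator `h ↦ f * h'`. -/
noncomputable def d (h : Polynomial F) : Polynomial F := f * derivative h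

lemma d_add (u v : Polynomial F) : d f (u + v) = d f u + d f v := by
  simp [d, mul_add]

lemma d_smul (n : ℕ) (u : Polynomial F) : d f (n • u) = n • d f u := by
  simp only [d, nsmul_eq_mul, derivative_mul, derivative_natCast, zero_mul, zero_add]; ring

lemma d_mul (u v : Polynomial F) : d f (u * v) = d f u * v + u * d f v := by
  simp [d, derivative_mul]; ring

lemma iter_d_add (n : ℕ) (u v : Polynomial F) :
    (d f)^[n] (u + v) = (d f)^[n] u + (d f)^[n] v := by
  induction n generalizing u v with
  | zero => simp
  | succ n ih => simp [Function.iterate_succ_apply, d_add, ih]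

lemma iter_d_smul (n : ℕ) (m : ℕ) (u : Polynomial F) :
    (d f)^[n] (m • u) = m • (d f)^[n] u := by
  induction n generalizing u with
  | zero => simp
  | succ n ih =>
    rw [Function.iterate_succ_apply, Function.iterate_succ_apply, d_smul, ih]

/-- Leibniz binomial formula for iterates of `d f`. -/
lemma iter_d_mul (n : ℕ) (u v : Polynomial F) :
    (d f)^[n] (u * v) =
      ∑ k ∈ range n.succ, (n.choose k • ((d f)^[n - k] u * (d f)^[k] v)) := by
  induction n with
  | zero => simp [Finset.range]
  | succ n IH =>
    calc
      (d f)^[n + 1] (u * v) =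
          d f (∑ k ∈ range n.succ,
              n.choose k • ((d f)^[n - k] u * (d f)^[k] v)) := by
        rw [Function.iterate_succ_apply', IH]
      _ = (∑ k ∈ range n.succ,
            n.choose k • ((d f)^[n - k + 1] u * (d f)^[k] v)) +
          ∑ k ∈ range n.succ,
            n.choose k • ((d f)^[n - k] u * (d f)^[k + 1] v) := by
        rw [map_sum' (d f) (d_add f) _ _ (by simp [d])]
        simp_rw [d_smul, d_mul, Function.iterate_succ_apply',
          smul_add, sum_add_distrib]
      _ = (∑ k ∈ range n.succ,
                n.choose k.succ • ((d f)^[n - k] u * (d f)^[k + 1] v)) +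
              1 • ((d f)^[n + 1] u * (d f)^[0] v) +
            ∑ k ∈ range n.succ, n.choose k • ((d f)^[n - k] u * (d f)^[k + 1] v) :=
        ?_
      _ = (((∑ k ∈ range n.succ, n.choose k • ((d f)^[n - k] u * (d f)^[k + 1] v)) +
              ∑ k ∈ range n.succ,
                n.choose k.succ • ((d f)^[n - k] u * (d f)^[k + 1] v))) +
            1 • ((d f)^[n + 1] u * (d f)^[0] v) := by
        rw [add_comm, add_assoc]
      _ = (∑ i ∈ range n.succ,
              (n + 1).choose (i + 1) • ((d f)^[n + 1 - (i + 1)] u * (d f)^[i + 1] v)) +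
            1 • ((d f)^[n + 1] u * (d f)^[0] v) := by
        simp_rw [Nat.choose_succ_succ, Nat.succ_sub_succ, add_smul, sum_add_distrib]
      _ = ∑ k ∈ range n.succ.succ,
            n.succ.choose k • ((d f)^[n.succ - k] u * (d f)^[k] v) := by
        rw [sum_range_succ' _ n.succ, Nat.choose_zero_right, tsub_zero]
    congr
    refine (sum_range_succ' _ _).trans (congr_arg₂ (· + ·) ?_ ?_)
    · rw [sum_range_succ, Nat.choose_succ_self, zero_smul, add_zero]
      refine sum_congr rfl fun k hk => ?_
      rw [mem_range] at hk
      congr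
      omega
    · rw [Nat.choose_zero_right, tsub_zero]

lemma d_zero_iter (n : ℕ) : (d f)^[n] 0 = 0 := by
  induction n with
  | zero => rfl
  | succ n ih => rw [Function.iterate_succ_apply, show d f 0 = 0 by simp [d], ih]

lemma iter_d_C_mul (n : ℕ) (c : F) (u : Polynomial F) :
    (d f)^[n] (Polynomial.C c * u) = Polynomial.C c * (d f)^[n] u := by
  induction n generalizing u with
  | zero => rfl
  | succ n ih =>
    rw [Function.iterate_succ_apply, Function.iterate_succ_apply,
      show d f (Polynomial.C c * u) = Polynomial.C c * d f u by
        simp [d, derivative_mul]; ring, ih]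

variable (p : ℕ)

lemma choose_cast_zero [CharP F p] (hp : p.Prime) (k : ℕ) (hk0 : k ≠ 0) (hkp : k < p) :
    ((p.choose k : ℕ) : Polynomial F) = 0 := by
  rw [← Polynomial.C_eq_natCast, (CharP.cast_eq_zero_iff F p _).2
    (hp.dvd_choose_self hk0 hkp), map_zero]

/-- In characteristic `p`, the `p`-th iterate of `d f` is a derivation. -/
lemma dp_mul [CharP F p] (hp : p.Prime) (u v : Polynomial F) :
    (d f)^[p] (u * v) = (d f)^[p] u * v + u * (d f)^[p] v := by
  rw [iter_d_mul]
  rw [Finset.sum_range_succ]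
  have hmid : ∀ k ∈ range (p - 1),
      p.choose (k + 1) • ((d f)^[p - (k + 1)] u * (d f)^[k + 1] v) = 0 := by
    intro k hk
    rw [mem_range] at hk
    rw [nsmul_eq_mul, choose_cast_zero p hp (k+1) (Nat.succ_ne_zero k) (by omega), zero_mul]
  have hone : p - 1 + 1 = p := Nat.succ_pred_eq_of_pos hp.pos
  have hsum := Finset.sum_range_succ'
    (fun k => p.choose k • ((d f)^[p - k] u * (d f)^[k] v)) (p - 1)
  rw [hone] at hsum
  rw [hsum, Finset.sum_eq_zero hmid]
  simp [Nat.choose_self, Nat.choose_zero_right, Nat.sub_self]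

lemma dp_X [CharP F p] (hp : p.Prime) :
    (d f)^[p] Polynomial.X = (d f)^[p - 1] f := by
  conv_lhs => rw [show p = (p - 1) + 1 from (Nat.succ_pred_eq_of_pos hp.pos).symm]
  rw [Function.iterate_succ_apply, show d f Polynomial.X = f by simp [d]]

lemma dp_pow [CharP F p] (hp : p.Prime) (n : ℕ) :
    (d f)^[p] (Polynomial.X ^ n) = (d f)^[p - 1] f * derivative (Polynomial.X ^ n) := by
  induction n with
  | zero =>
    have h1 : ((Polynomial.X : Polynomial F) ^ 0) = Polynomial.C 1 * 0 + Polynomial.C 1 := by simp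
    conv_lhs => rw [show p = (p - 1) + 1 from (Nat.succ_pred_eq_of_pos hp.pos).symm]
    rw [Function.iterate_succ_apply, show d f ((Polynomial.X : Polynomial F) ^ 0) = 0 by
      simp [d], d_zero_iter]
    simp
  | succ n ih =>
    rw [pow_succ, dp_mul f p hp, ih, dp_X f p hp, derivative_mul]
    simp only [derivative_X, mul_one]
    ring

lemma dp_eq [CharP F p] (hp : p.Prime) (h : Polynomial F) :
    (d f)^[p] h = (d f)^[p - 1] f * derivative h := by
  induction h using Polynomial.induction_on' with
  | add u v hu hv => rw [iter_d_add, hu, hv, derivative_add]; ring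
  | monomial n c =>
    rw [← Polynomial.C_mul_X_pow_eq_monomial, iter_d_C_mul, dp_pow f p hp, derivative_mul]
    simp only [derivative_C, zero_mul, zero_add]
    ring

lemma d_iter_f_mul (k : ℕ) (u : Polynomial F) :
    (d f)^[k] (f * u) = f * (fun u : Polynomial F => derivative (f * u))^[k] u := by
  induction k generalizing u with
  | zero => rfl
  | succ k ih =>
    rw [Function.iterate_succ_apply, Function.iterate_succ_apply,
      show d f (f * u) = f * (fun u : Polynomial F => derivative (f * u)) u by simp [d], ih]

end WittAux

theorem witt_pth_power_constant_eq_word (p : ℕ) (hp : p.Prime) (F : Type*) [Field F] [CharP F p]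
    (f : Polynomial F)
    (g : Polynomial F)
    (hg : g = (fun u : Polynomial F => Polynomial.derivative (f * u))^[p - 1] 1) :
    (g - Polynomial.C (g.coeff 0) ∈ Ideal.span {(Polynomial.X : Polynomial F) ^ p}) ∧
    (∀ h : Polynomial F,
      (fun h : Polynomial F => f * Polynomial.derivative h)^[p] h
          - Polynomial.C (g.coeff 0) * (f * Polynomial.derivative h)
        ∈ Ideal.span {(Polynomial.X : Polynomial F) ^ p}) := by
  classical
  have hd : (fun h : Polynomial F => f * Polynomial.derivative h) = WittAux.d f := rfl
  have hfg : (WittAux.d f)^[p - 1] f = f * g := by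
    rw [hg]
    have h1 := WittAux.d_iter_f_mul f (p - 1) 1
    rw [mul_one] at h1
    exact h1
  have key : ∀ h : Polynomial F,
      (WittAux.d f)^[p] h = f * g * Polynomial.derivative h := fun h => by
    rw [WittAux.dp_eq f p hp h, hfg]
  have hderiv : Polynomial.derivative g = 0 := by
    by_cases hf : f = 0
    · have hg0 : g = 0 := by
        subst hf
        have hp2 := hp.two_le
        rw [hg, show p - 1 = (p - 2) + 1 by omega, Function.iterate_succ_apply]
        show (fun u : Polynomial F => Polynomial.derivative ((0 : Polynomial F) * u))^[p - 2]
          (Polynomial.derivative ((0 : Polynomial F) * 1)) = 0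
        rw [show Polynomial.derivative ((0 : Polynomial F) * 1) = 0 by simp]
        exact Function.iterate_fixed (by simp) _
      rw [hg0, Polynomial.derivative_zero]
    · have e1 : (WittAux.d f)^[p + 1] Polynomial.X
          = f * Polynomial.derivative (f * g) := by
        rw [Function.iterate_succ_apply', key Polynomial.X]
        simp [WittAux.d]
      have e2 : (WittAux.d f)^[p + 1] Polynomial.X
          = f * (g * Polynomial.derivative f) := by
        rw [Function.iterate_succ_apply,
          show WittAux.d f Polynomial.X = f by simp [WittAux.d], key f]
        ring
      have e3 : Polynomial.derivative (f * g) = g * Polynomial.derivative f :=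
        mul_left_cancel₀ hf (e1 ▸ e2)
      rw [Polynomial.derivative_mul] at e3
      have e4 : f * Polynomial.derivative g = 0 := by
        linear_combination e3
      rcases mul_eq_zero.mp e4 with h | h
      · exact absurd h hf
      · exact h
  have hcoeff : ∀ n : ℕ, 0 < n → n < p → g.coeff n = 0 := by
    intro n h0 hlt
    obtain ⟨m, rfl⟩ : ∃ m, n = m + 1 := ⟨n - 1, by omega⟩
    have h1 := Polynomial.coeff_derivative g m
    rw [hderiv, Polynomial.coeff_zero] at h1
    have h2 : ((m : F) + 1) ≠ 0 := by
      have : (((m + 1 : ℕ)) : F) ≠ 0 := by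
        rw [Ne, CharP.cast_eq_zero_iff F p]
        intro hdvd
        have := Nat.le_of_dvd (by omega) hdvd
        omega
      push_cast at this
      exact this
    rcases mul_eq_zero.mp h1.symm with h | h
    · exact h
    · exact absurd h h2
  have hmem : g - Polynomial.C (g.coeff 0)
      ∈ Ideal.span {(Polynomial.X : Polynomial F) ^ p} := by
    rw [Ideal.mem_span_singleton, Polynomial.X_pow_dvd_iff]
    intro d hdp
    rcases Nat.eq_zero_or_pos d with h0 | h0
    · subst h0
      simp
    · rw [Polynomial.coeff_sub, hcoeff d h0 hdp, Polynomial.coeff_C,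
        if_neg (by omega), sub_zero]
  refine ⟨hmem, fun h => ?_⟩
  have heq : (fun h : Polynomial F => f * Polynomial.derivative h)^[p] h
        - Polynomial.C (g.coeff 0) * (f * Polynomial.derivative h)
      = (g - Polynomial.C (g.coeff 0)) * (f * Polynomial.derivative h) := by
    rw [hd, key h]
    ring
  rw [heq]
  exact Ideal.mul_mem_right _ _ hmem
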